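/- The pair u₀(t,x) = x/t, u₁(t,x) = k₁/(t x³) + k₂/t − x/6 gives a first-order approximate solution of the damped nonlinear wave equation u_tt − (u² u_x)_x + ε u_t = 0, in the sense that substituting u = u₀ + ε u₁ into the equation, the coefficients of ε⁰ and ε¹ both vanish identically (for t, x ≠ 0). -/

import Mathlib

/-- `u₀(t,x) = x/t`. -/
noncomputable def u0nlw : ℝ → ℝ → ℝ := fun t x => x / t

/-- `u₁(t,x) = k₁/(t x³) + k₂/t − x/6`. -/
noncomputable def u1nlw (k₁ k₂ : ℝ) : ℝ → ℝ → ℝ :=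
  fun t x => k₁ / (t * x ^ 3) + k₂ / t - x / 6

private lemma zpn (y : ℝ) (n : ℕ) : y ^ (-(n : ℤ)) = 1 / y ^ n := by
  rw [zpow_neg, zpow_natCast, one_div]

/-- derivative of `c / y ^ n` at `x ≠ 0`. -/
private lemma hd_cdiv (c : ℝ) (n : ℕ) {x : ℝ} (hx : x ≠ 0) :
    HasDerivAt (fun y : ℝ => c / y ^ n) (-(n * c) / x ^ (n + 1)) x := by
  have h := (hasDerivAt_zpow (-(n : ℤ)) x (Or.inl hx)).const_mul c
  have hf : (fun y : ℝ => c * y ^ (-(n : ℤ))) = fun y : ℝ => c / y ^ n := by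
    funext y; rw [zpn]; ring
  rw [hf] at h
  refine h.congr_deriv ?_
  rw [show ((-(n : ℤ)) - 1) = -(((n + 1 : ℕ)) : ℤ) by push_cast; ring, zpn]
  push_cast; ring

-- derivative of u0 in t
private lemma du0t {x t : ℝ} (ht : t ≠ 0) :
    deriv (fun t' => u0nlw t' x) t = -x / t ^ 2 := by
  have h : (fun t' => u0nlw t' x) = fun t' : ℝ => x / t' ^ 1 := by
    funext t'; simp [u0nlw]
  rw [h, (hd_cdiv x 1 ht).deriv]
  norm_num
-- derivative of u0 in x (everywhere)
private lemma du0x (t x' : ℝ) : deriv (fun y => u0nlw t y) x' = 1 / t := by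
  simpa [u0nlw] using ((hasDerivAt_id x').div_const t).deriv

-- derivative of u1 in t
private lemma du1t (k₁ k₂ : ℝ) {x t : ℝ} (ht : t ≠ 0) :
    deriv (fun t' => u1nlw k₁ k₂ t' x) t = -(k₁ / x ^ 3 + k₂) / t ^ 2 := by
  have h : (fun t' => u1nlw k₁ k₂ t' x)
      = fun t' : ℝ => (k₁ / x ^ 3 + k₂) / t' ^ 1 - x / 6 := by
    funext t'
    simp only [u1nlw, pow_one, add_div, div_div]
    rw [mul_comm]
  rw [h, ((hd_cdiv (k₁ / x ^ 3 + k₂) 1 ht).sub_const (x / 6)).deriv]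
  norm_num

-- derivative of u1 in x
private lemma du1x (k₁ k₂ t : ℝ) {x' : ℝ} (hx' : x' ≠ 0) :
    deriv (fun y => u1nlw k₁ k₂ t y) x' = -3 * k₁ / (t * x' ^ 4) - 1 / 6 := by
  have h : (fun y => u1nlw k₁ k₂ t y)
      = fun y : ℝ => (k₁ / t) / y ^ 3 + (k₂ / t - y / 6) := by
    funext y
    simp only [u1nlw, div_div]
    ring
  have h2 : HasDerivAt (fun y : ℝ => k₂ / t - y / 6) (0 - 1 / 6) x' :=
    (hasDerivAt_const x' (k₂ / t)).sub ((hasDerivAt_id x').div_const 6)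
  rw [h, ((hd_cdiv (k₁ / t) 3 hx').fun_add h2).deriv]
  push_cast
  ring

/-- The pair `u₀ = x/t`, `u₁ = k₁/(t x³) + k₂/t − x/6` is a first-order approximate
solution of `u_tt − (u² u_x)_x + ε u_t = 0`: both the `ε⁰` and `ε¹` coefficients of
the expanded equation vanish for `t ≠ 0`, `x ≠ 0`. -/
theorem stmt11 (k₁ k₂ : ℝ) (t x : ℝ) (ht : t ≠ 0) (hx : x ≠ 0) :
    -- ε⁰ coefficient: ∂²u₀/∂t² − ∂/∂x (u₀² ∂u₀/∂x) = 0
    (deriv (deriv (fun t' => u0nlw t' x)) t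
      - deriv (fun x' => (u0nlw t x') ^ 2 * deriv (fun y => u0nlw t y) x') x = 0)
    ∧
    -- ε¹ coefficient: ∂²u₁/∂t² − ∂/∂x (u₀² ∂u₁/∂x + 2u₀u₁ ∂u₀/∂x) + ∂u₀/∂t = 0
    (deriv (deriv (fun t' => u1nlw k₁ k₂ t' x)) t
      - deriv (fun x' => (u0nlw t x') ^ 2 * deriv (fun y => u1nlw k₁ k₂ t y) x'
          + 2 * u0nlw t x' * u1nlw k₁ k₂ t x' * deriv (fun y => u0nlw t y) x') x
      + deriv (fun t' => u0nlw t' x) t = 0) := by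
  have hnhds : {t' : ℝ | t' ≠ 0} ∈ nhds t := isOpen_compl_singleton.mem_nhds ht
  have hnhdsx : {x' : ℝ | x' ≠ 0} ∈ nhds x := isOpen_compl_singleton.mem_nhds hx
  -- second t-derivative of u0
  have h1 : deriv (deriv (fun t' => u0nlw t' x)) t = 2 * x / t ^ 3 := by
    have he : deriv (fun t' => u0nlw t' x)
        =ᶠ[nhds t] fun t' : ℝ => (-x) / t' ^ 2 := by
      filter_upwards [hnhds] with t' ht'
      rw [du0t ht']
    rw [he.deriv_eq, (hd_cdiv (-x) 2 ht).deriv]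
    push_cast; ring
  -- x-part of ε⁰
  have h2 : deriv (fun x' => (u0nlw t x') ^ 2 * deriv (fun y => u0nlw t y) x') x
      = 2 * x / t ^ 3 := by
    have he : (fun x' => (u0nlw t x') ^ 2 * deriv (fun y => u0nlw t y) x')
        = fun x' : ℝ => (1 / t ^ 3) * x' ^ 2 := by
      funext x'; rw [du0x]; simp only [u0nlw]; ring
    rw [he, ((hasDerivAt_pow 2 x).const_mul (1 / t ^ 3)).deriv]
    push_cast; ring
  -- second t-derivative of u1
  have h3 : deriv (deriv (fun t' => u1nlw k₁ k₂ t' x)) t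
      = 2 * (k₁ / x ^ 3 + k₂) / t ^ 3 := by
    have he : deriv (fun t' => u1nlw k₁ k₂ t' x)
        =ᶠ[nhds t] fun t' : ℝ => (-(k₁ / x ^ 3 + k₂)) / t' ^ 2 := by
      filter_upwards [hnhds] with t' ht'
      rw [du1t k₁ k₂ ht']
    rw [he.deriv_eq, (hd_cdiv (-(k₁ / x ^ 3 + k₂)) 2 ht).deriv]
    push_cast; ring
  -- x-part of ε¹
  have h4 : deriv (fun x' => (u0nlw t x') ^ 2 * deriv (fun y => u1nlw k₁ k₂ t y) x'
          + 2 * u0nlw t x' * u1nlw k₁ k₂ t x' * deriv (fun y => u0nlw t y) x') x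
      = 2 * k₁ / (t ^ 3 * x ^ 3) + 2 * k₂ / t ^ 3 - x / t ^ 2 := by
    have he : (fun x' => (u0nlw t x') ^ 2 * deriv (fun y => u1nlw k₁ k₂ t y) x'
          + 2 * u0nlw t x' * u1nlw k₁ k₂ t x' * deriv (fun y => u0nlw t y) x')
        =ᶠ[nhds x] fun x' : ℝ => (-k₁ / t ^ 3) / x' ^ 2
            + ((2 * k₂ / t ^ 3) * x' + (-1 / (2 * t ^ 2)) * x' ^ 2) := by
      filter_upwards [hnhdsx] with x' hx'
      rw [du1x k₁ k₂ t hx', du0x]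
      simp only [u0nlw, u1nlw]
      field_simp
      ring
    have hlin : HasDerivAt (fun x' : ℝ => (2 * k₂ / t ^ 3) * x' + (-1 / (2 * t ^ 2)) * x' ^ 2)
        ((2 * k₂ / t ^ 3) * 1 + (-1 / (2 * t ^ 2)) * (2 * x ^ 1)) x :=
      ((hasDerivAt_id x).const_mul (2 * k₂ / t ^ 3)).add
        ((hasDerivAt_pow 2 x).const_mul (-1 / (2 * t ^ 2)))
    rw [he.deriv_eq, ((hd_cdiv (-k₁ / t ^ 3) 2 hx).fun_add hlin).deriv]
    push_cast
    field_simp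
    ring
  refine ⟨?_, ?_⟩
  · rw [h1, h2]; ring
  · rw [h3, h4, du0t ht]
    field_simp
    ring
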